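/- Let σ : ℝ → ℝ be the logistic sigmoid σ(x) = 1/(1 + exp(−x)). Let (x_i, y_i), i = 1, …, N, be labeled source samples with y_i ∈ {0, 1}, and let z_j, j = 1, …, M, be target samples. Suppose for each i the map θ ↦ f_i(θ) ∈ (0,1) (the teacher's prediction σ(g_θ(x_i)) on source sample i) is differentiable at θ, and for each j the logit g_j : ℝ → ℝ is differentiable at θ with |g_j'(θ)| ≤ A and |g_j(θ)| ≥ ρ ≥ 0; let c_j ∈ ℝ be the fixed student predictions and λ ≥ 0. Define the teacher loss L(θ) = S(θ) + λ · (1/M) · Σ_{j=1}^{M} (σ(g_j(θ)) − c_j)², where S(θ) = (1/N) · Σ_{i=1}^{N} [ y_i · log f_i(θ) + (1 − y_i) · log(1 − f_i(θ)) ] is the source cross-entropy term. Then L is differentiable at θ and |L'(θ) − S'(θ)| ≤ 2λ · ((1/M) · Σ_{j=1}^{M} |σ(g_j(θ)) − c_j|) · A · exp(−ρ). -/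

import Mathlib

private lemma sigma_hasDeriv (x : ℝ) :
    HasDerivAt (fun x : ℝ => 1 / (1 + Real.exp (-x)))
      (Real.exp (-x) / (1 + Real.exp (-x)) ^ 2) x := by
  have hpos : 0 < 1 + Real.exp (-x) := by positivity
  have h1 : HasDerivAt (fun x : ℝ => 1 + Real.exp (-x)) (-Real.exp (-x)) x := by
    simpa using ((Real.hasDerivAt_exp (-x)).comp x ((hasDerivAt_id x).neg)).const_add 1
  have := h1.inv hpos.ne'
  have e : (fun x : ℝ => 1 / (1 + Real.exp (-x))) = (fun x => 1 + Real.exp (-x))⁻¹ := by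
    funext t; simp [one_div]
  rw [e, show Real.exp (-x) / (1 + Real.exp (-x)) ^ 2
    = - -Real.exp (-x) / (1 + Real.exp (-x)) ^ 2 by ring]
  exact this

private lemma sigma_deriv_bound (x : ℝ) :
    Real.exp (-x) / (1 + Real.exp (-x)) ^ 2 ≤ Real.exp (-|x|) := by
  have hnn : (0:ℝ) < 1 + Real.exp (-x) := by positivity
  rcases abs_cases x with ⟨h, _⟩ | ⟨h, _⟩
  · rw [h]
    have h1 : (1:ℝ) ≤ (1 + Real.exp (-x)) ^ 2 := by nlinarith [Real.exp_pos (-x)]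
    calc Real.exp (-x) / (1 + Real.exp (-x)) ^ 2 ≤ Real.exp (-x) / 1 := by
          gcongr
      _ = Real.exp (-x) := by ring
  · rw [h, neg_neg]
    rw [div_le_iff₀ (by positivity)]
    have := Real.exp_pos x
    have hmul : Real.exp x * Real.exp (-x) = 1 := by
      rw [← Real.exp_add]; simp
    nlinarith [Real.exp_pos (-x), sq_nonneg (Real.exp (-x))]

/-- Lemma 1 of the paper (precise form): the teacher loss
`L θ = S θ + λ * (1/M) * ∑ j, (σ (g j θ) - c j)^2`, where
`S θ = (1/N) * ∑ i, (y i * log (f i θ) + (1 - y i) * log (1 - f i θ))` is the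
source cross-entropy term, is differentiable at `θ`, and its derivative
deviates from the derivative of the source term by at most
`2λ * ((1/M) * ∑ j, |σ (g j θ) - c j|) * A * exp (-ρ)`. -/
theorem teacher_loss_deriv_bound (σ : ℝ → ℝ)
    (hσ : ∀ x : ℝ, σ x = 1 / (1 + Real.exp (-x)))
    (N M : ℕ) (hN : 0 < N) (hM : 0 < M)
    (f : Fin N → ℝ → ℝ) (y : Fin N → ℝ)
    (g : Fin M → ℝ → ℝ) (c : Fin M → ℝ)
    (θ A ρ lam : ℝ)
    (hy : ∀ i, y i = 0 ∨ y i = 1)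
    (hf : ∀ i, DifferentiableAt ℝ (f i) θ)
    (hf01 : ∀ i, f i θ ∈ Set.Ioo (0 : ℝ) 1)
    (hg : ∀ j, DifferentiableAt ℝ (g j) θ)
    (hA : ∀ j, |deriv (g j) θ| ≤ A)
    (hρ0 : 0 ≤ ρ) (hρ : ∀ j, ρ ≤ |g j θ|)
    (hlam : 0 ≤ lam) :
    DifferentiableAt ℝ
        (fun t =>
          ((1 / (N : ℝ)) *
              ∑ i, (y i * Real.log (f i t) +
                (1 - y i) * Real.log (1 - f i t))) +
            lam * ((1 / (M : ℝ)) * ∑ j, (σ (g j t) - c j) ^ 2)) θ ∧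
      |deriv
          (fun t =>
            ((1 / (N : ℝ)) *
                ∑ i, (y i * Real.log (f i t) +
                  (1 - y i) * Real.log (1 - f i t))) +
              lam * ((1 / (M : ℝ)) * ∑ j, (σ (g j t) - c j) ^ 2)) θ -
        deriv
          (fun t =>
            (1 / (N : ℝ)) *
              ∑ i, (y i * Real.log (f i t) +
                (1 - y i) * Real.log (1 - f i t))) θ| ≤
        2 * lam * ((1 / (M : ℝ)) * ∑ j, |σ (g j θ) - c j|) * A *
          Real.exp (-ρ) := by
  have hA0 : 0 ≤ A := le_trans (abs_nonneg _) (hA ⟨0, hM⟩)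
  -- differentiability of the source term S
  have hS : DifferentiableAt ℝ
      (fun t => (1 / (N : ℝ)) *
        ∑ i, (y i * Real.log (f i t) + (1 - y i) * Real.log (1 - f i t))) θ := by
    apply DifferentiableAt.const_mul
    apply DifferentiableAt.fun_sum
    intro i _
    have h1 : f i θ ≠ 0 := (hf01 i).1.ne'
    have h2 : 1 - f i θ ≠ 0 := by have := (hf01 i).2; intro h; linarith [sub_eq_zero.mp h]
    exact ((differentiableAt_const _).mul ((hf i).log h1)).add
      ((differentiableAt_const _).mul (((differentiableAt_const 1).sub (hf i)).log h2))
  -- derivative of each consistency term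
  set σ' : Fin M → ℝ := fun j =>
    Real.exp (-(g j θ)) / (1 + Real.exp (-(g j θ))) ^ 2 with hσ'def
  set d : Fin M → ℝ := fun j =>
    2 * (σ (g j θ) - c j) * (σ' j * deriv (g j) θ) with hddef
  have hterm : ∀ j, HasDerivAt (fun t => (σ (g j t) - c j) ^ 2) (d j) θ := by
    intro j
    have hgj := (hg j).hasDerivAt
    have hcomp : HasDerivAt (fun t => σ (g j t)) (σ' j * deriv (g j) θ) θ := by
      have h := (sigma_hasDeriv (g j θ)).comp θ hgj
      simp only [Function.comp_def] at h
      simpa [← hσ] using h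
    have := (hcomp.sub_const (c j)).fun_pow 2
    refine this.congr_deriv ?_
    simp only [hddef]
    push_cast
    ring
  have hT : HasDerivAt
      (fun t => (1 / (M : ℝ)) * ∑ j, (σ (g j t) - c j) ^ 2)
      ((1 / (M : ℝ)) * ∑ j, d j) θ :=
    (HasDerivAt.fun_sum fun j _ => hterm j).const_mul _
  have hlamT := hT.const_mul lam
  have hL := (hS.hasDerivAt).add hlamT
  refine ⟨hL.differentiableAt, ?_⟩
  rw [(show HasDerivAt (fun t => ((1 / (N : ℝ)) *
      ∑ i, (y i * Real.log (f i t) + (1 - y i) * Real.log (1 - f i t))) +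
      lam * ((1 / (M : ℝ)) * ∑ j, (σ (g j t) - c j) ^ 2)) _ θ from hL).deriv]
  have hSd : deriv (fun t =>
      (1 / (N : ℝ)) *
        ∑ i, (y i * Real.log (f i t) + (1 - y i) * Real.log (1 - f i t))) θ
      = deriv _ θ := rfl
  simp only [add_sub_cancel_left]
  -- bound
  have hdj : ∀ j, |d j| ≤ 2 * |σ (g j θ) - c j| * A * Real.exp (-ρ) := by
    intro j
    have hσ'nn : 0 ≤ σ' j := by positivity
    have hσ'le : σ' j ≤ Real.exp (-ρ) := by
      calc σ' j ≤ Real.exp (-|g j θ|) := sigma_deriv_bound (g j θ)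
        _ ≤ Real.exp (-ρ) := Real.exp_le_exp.mpr (by linarith [hρ j])
    calc |d j| = 2 * |σ (g j θ) - c j| * (σ' j * |deriv (g j) θ|) := by
          simp only [hddef, abs_mul, abs_of_nonneg hσ'nn, abs_two]
          try ring
      _ ≤ 2 * |σ (g j θ) - c j| * (Real.exp (-ρ) * A) := by
          have h1 : σ' j * |deriv (g j) θ| ≤ Real.exp (-ρ) * A :=
            mul_le_mul hσ'le (hA j) (abs_nonneg _) (Real.exp_pos _).le
          exact mul_le_mul_of_nonneg_left h1 (by positivity)
      _ = 2 * |σ (g j θ) - c j| * A * Real.exp (-ρ) := by ring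
  have hsum : |∑ j, d j| ≤ ∑ j, (2 * |σ (g j θ) - c j| * A * Real.exp (-ρ)) :=
    (Finset.abs_sum_le_sum_abs _ _).trans (Finset.sum_le_sum fun j _ => hdj j)
  have hM0 : (0:ℝ) < (M:ℝ) := by exact_mod_cast hM
  calc |lam * ((1 / (M : ℝ)) * ∑ j, d j)|
      = lam * ((1 / (M : ℝ)) * |∑ j, d j|) := by
        rw [abs_mul, abs_mul, abs_of_nonneg hlam, abs_of_nonneg (by positivity)]
    _ ≤ lam * ((1 / (M : ℝ)) * ∑ j, (2 * |σ (g j θ) - c j| * A * Real.exp (-ρ))) := by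
        gcongr
    _ = 2 * lam * ((1 / (M : ℝ)) * ∑ j, |σ (g j θ) - c j|) * A * Real.exp (-ρ) := by
        simp only [Finset.mul_sum, Finset.sum_mul]
        exact Finset.sum_congr rfl fun j _ => by ring
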